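/- Let α ∈ (0,1), C > 0, C₀ > 0, and set δ_α = (1/4)(α/(α+1) − α/2). Suppose u satisfies: (i) u(x', h) ≤ −r^{α+δ_α} h + ((n−1)C₀/2) h² whenever ∂_y u(x',0) < −r^{α+δ_α}; (ii) u(0,h) ≥ −C h^{1+α}; (iii) u(0,h) ≤ u(x,h) + C₀ h² for all x in the convex hull of {∂_y u < −r^{α+δ_α}} whenever 0 belongs to that convex hull. Then there exists r₀ = r₀(α, C, C₀) > 0 such that for r ≤ r₀ the convex hull of {x ∈ B_r' : ∂_y u(x,0) < −r^{α+δ_α}} does not contain the origin. -/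

import Mathlib

open Metric Set MeasureTheory

noncomputable section

/-- Ambient Euclidean space `ℝⁿ × ℝ`, with `y`-variable the last coordinate. -/
abbrev E (n : ℕ) := EuclideanSpace ℝ (Fin (n + 1))

/-- The `y`-coordinate of a point. -/
def yc {n : ℕ} (x : E n) : ℝ := x (Fin.last n)

/-- Second derivative of `f` at `x` in the direction `v`. -/
def secondDeriv {n : ℕ} (f : E n → ℝ) (x v : E n) : ℝ :=
  deriv (deriv (fun t : ℝ => f (x + t • v))) 0

/-- The Laplacian of `f` at `x`, as the sum of pure second derivatives. -/
def lapl {n : ℕ} (f : E n → ℝ) (x : E n) : ℝ :=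
  ∑ i : Fin (n + 1), secondDeriv f x (EuclideanSpace.single i 1)

/-- The normal derivative `∂_y f`. -/
def derivY {n : ℕ} (f : E n → ℝ) (x : E n) : ℝ :=
  deriv (fun t : ℝ => f (x + t • EuclideanSpace.single (Fin.last n) 1)) 0

/-- The upper half-ball `B_r⁺`. -/
def upHalfBall (n : ℕ) (r : ℝ) : Set (E n) := {x | ‖x‖ < r ∧ 0 < yc x}

/-- The flat part `B_r' = B_r ∩ {y = 0}`. -/
def flatBall (n : ℕ) (r : ℝ) : Set (E n) := {x | ‖x‖ < r ∧ yc x = 0}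

/-- The upper spherical part `(∂B_r)⁺`. -/
def upSphere (n : ℕ) (r : ℝ) : Set (E n) := {x | ‖x‖ = r ∧ 0 < yc x}

/-- The model penalization `β_ε`. -/
def betaPen (ε t : ℝ) : ℝ := if t < 0 then t / ε else 0

/-- `u` solves the penalized boundary obstacle problem in `B₁` with boundary data `φ`:
harmonic in `B₁⁺`, continuous up to the boundary, Robin condition `∂_y u = β_ε(u)` on `B₁'`,
and `u = φ` on `(∂B₁)⁺`. -/
def SolvesPenalized {n : ℕ} (ε : ℝ) (φ u : E n → ℝ) : Prop :=
  (∀ x ∈ upHalfBall n 1, lapl u x = 0) ∧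
  ContinuousOn u (closure (upHalfBall n 1)) ∧
  (∀ x ∈ flatBall n 1, derivY u x = betaPen ε (u x)) ∧
  (∀ x ∈ upSphere n 1, u x = φ x)

/-- Lemma 8 (almost convexity): with `δ_α = (1/4)(α/(α+1) − α/2)`, under the three growth
hypotheses (i)–(iii) there is `r₀ = r₀(α, C, C₀) > 0` such that for `r ≤ r₀` the convex hull
of `{x ∈ B_r' : ∂_y u(x,0) < −r^{α+δ_α}}` does not contain the origin. -/
theorem stmt17 (n : ℕ) (α C C₀ : ℝ) (hα : 0 < α) (hα1 : α ≤ 1/2) (hC : 0 < C) (hC₀ : 0 < C₀)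
    (u : E n → ℝ)
    (dα : ℝ) (hdα : dα = (1/4) * (α / (α + 1) - α / 2))
    (S : ℝ → Set (E n)) (hS : S = fun r => {x : E n | x ∈ flatBall n r ∧ derivY u x < -(r ^ (α + dα))})
    (h1 : ∀ r : ℝ, 0 < r → r < 1 → ∀ x ∈ S r, ∀ h : ℝ, 0 < h → h < 1 →
      u (x + h • EuclideanSpace.single (Fin.last n) 1) ≤
        -(r ^ (α + dα)) * h + ((n : ℝ) - 1) * C₀ / 2 * h ^ 2)
    (h2 : ∀ h : ℝ, 0 < h → h < 1 →
      -(C * h ^ (1 + α)) ≤ u (h • EuclideanSpace.single (Fin.last n) 1))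
    (h3 : ∀ r : ℝ, 0 < r → r < 1 → (0 : E n) ∈ convexHull ℝ (S r) →
      ∀ x ∈ convexHull ℝ (S r), ∀ h : ℝ, 0 < h → h < 1 →
        u (h • EuclideanSpace.single (Fin.last n) 1) ≤
          u (x + h • EuclideanSpace.single (Fin.last n) 1) + C₀ * h ^ 2) :
    ∃ r₀ : ℝ, 0 < r₀ ∧ ∀ r : ℝ, 0 < r → r ≤ r₀ → (0 : E n) ∉ convexHull ℝ (S r) := by
  have hαp1 : (0:ℝ) < α + 1 := by linarith
  have hfrac : α / (α + 1) ≤ α := by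
    rw [div_le_iff₀ hαp1]; nlinarith
  have hfrac2 : α / 2 < α / (α + 1) := by
    rw [div_lt_div_iff₀ two_pos hαp1]; nlinarith
  have hd_pos : 0 < dα := by rw [hdα]; linarith
  have hd_le : dα ≤ α / 4 := by rw [hdα]; linarith
  have hdiv_nonneg : 0 ≤ 2 * dα / α := by positivity
  obtain ⟨e2, he2def⟩ : ∃ e2 : ℝ, e2 = 1 + 2 * dα / α - α - dα := ⟨_, rfl⟩
  obtain ⟨e3, he3def⟩ : ∃ e3 : ℝ, e3 = 1 + 2 * dα / α := ⟨_, rfl⟩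
  have hd8 : dα ≤ 1/8 := by linarith
  have he2_pos : 0 < e2 := by rw [he2def]; linarith
  have he3_pos : 0 < e3 := by rw [he3def]; linarith
  set K : ℝ := ((n : ℝ) / 2 + 1) * C₀ with hKdef
  have hK_pos : 0 < K := by positivity
  refine ⟨min (1/2) (min ((1/(4*C)) ^ (1/dα)) ((1/(4*K)) ^ (1/e2))), by positivity, ?_⟩
  intro r hr hrle hhull
  have hr1 : r < 1 := lt_of_le_of_lt (hrle.trans (min_le_left _ _)) (by norm_num)
  have hbound : ∀ (e M : ℝ), 0 < e → 0 < M → r ≤ (1/(4*M)) ^ (1/e) → M * r ^ e ≤ 1/4 := by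
    intro e M he hM hre
    have h1' : r ^ e ≤ ((1/(4*M)) ^ (1/e)) ^ e := Real.rpow_le_rpow hr.le hre he.le
    rw [← Real.rpow_mul (by positivity), one_div_mul_cancel he.ne', Real.rpow_one] at h1'
    calc M * r ^ e ≤ M * (1/(4*M)) := mul_le_mul_of_nonneg_left h1' hM.le
      _ = 1/4 := by field_simp
  have hb1 : C * r ^ dα ≤ 1/4 :=
    hbound dα C hd_pos hC (hrle.trans ((min_le_right _ _).trans (min_le_left _ _)))
  have hb2 : K * r ^ e2 ≤ 1/4 :=
    hbound e2 K he2_pos hK_pos (hrle.trans ((min_le_right _ _).trans (min_le_right _ _)))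
  have hSne : (S r).Nonempty := by
    by_contra hne
    rw [Set.not_nonempty_iff_eq_empty] at hne
    rw [hne, convexHull_empty] at hhull
    exact hhull
  obtain ⟨x, hx⟩ := hSne
  set h : ℝ := r ^ e3 with hhdef
  have hh0 : 0 < h := Real.rpow_pos_of_pos hr _
  have hh1 : h < 1 := Real.rpow_lt_one hr.le hr1 he3_pos
  have hsq : (0:ℝ) ≤ h ^ 2 := sq_nonneg h
  have i2 := h2 h hh0 hh1
  have i3 := h3 r hr hr1 hhull x (subset_convexHull ℝ _ hx) h hh0 hh1
  have i1 := h1 r hr hr1 x hx h hh0 hh1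
  have key : r ^ (α + dα) * h ≤ C * h ^ (1 + α) + K * h ^ 2 := by
    rw [hKdef]; nlinarith
  set B : ℝ := α + dα + e3 with hBdef
  have hBpos : 0 < r ^ B := Real.rpow_pos_of_pos hr _
  have hE0 : r ^ (α + dα) * h = r ^ B := by
    rw [hhdef, ← Real.rpow_add hr, hBdef]
  have hexp1 : e3 * (1 + α) = B + dα := by
    rw [hBdef, he3def]; field_simp; ring
  have hE1 : h ^ (1 + α) = r ^ B * r ^ dα := by
    rw [hhdef, ← Real.rpow_mul hr.le, hexp1, Real.rpow_add hr]
  have hexp2 : e3 * (2 : ℝ) = B + e2 := by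
    rw [hBdef, he3def, he2def]; ring
  have hE2 : h ^ 2 = r ^ B * r ^ e2 := by
    rw [hhdef, ← Real.rpow_natCast (r ^ e3) 2, ← Real.rpow_mul hr.le]
    push_cast
    rw [hexp2, Real.rpow_add hr]
  rw [hE0, hE1, hE2] at key
  have : (1 : ℝ) ≤ C * r ^ dα + K * r ^ e2 := by
    rw [← mul_le_mul_iff_of_pos_right hBpos]
    calc (1 : ℝ) * r ^ B = r ^ B := one_mul _
      _ ≤ C * (r ^ B * r ^ dα) + K * (r ^ B * r ^ e2) := key
      _ = (C * r ^ dα + K * r ^ e2) * r ^ B := by ring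
  linarith
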